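/- Let f be a (θ,λ)-power quasi-symmetry with extended scale functions Φ_x. For distinct x, y ∈ Z and any t ≥ d_Z(x,y), |Φ_x(log₂(1/t)) − Φ_y(log₂(1/t))| ≤ C(θ,λ). -/

import Mathlib

noncomputable section

universe u v

/-- The hyperbolic-cone distance on `Z × (0,∞)`, viewed as a function on `Z × ℝ`:
`ρ_h((x,s),(y,t)) = 2 log((d(x,y) + max s t)/√(st))`. -/
def rhoH {Z : Type u} [MetricSpace Z] (p q : Z × ℝ) : ℝ :=
  2 * Real.log ((dist p.1 q.1 + max p.2 q.2) / Real.sqrt (p.2 * q.2))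

/-- The control function `η_{θ,λ}` of a (θ,λ)-power quasi-symmetry. -/
def etaPQS (theta lam t : ℝ) : ℝ := if t < 1 then lam * t ^ (1/theta) else lam * t ^ theta

/-- `f` satisfies the (θ,λ)-power quasi-symmetry inequality. -/
def IsPQS {Z : Type u} {W : Type v} [MetricSpace Z] [MetricSpace W]
    (theta lam : ℝ) (f : Z → W) : Prop :=
  ∀ x y z : Z, y ≠ z →
    dist (f x) (f z) / dist (f y) (f z) ≤ etaPQS theta lam (dist x z / dist y z)

/-- `f` is an (α,C)-snowflake mapping. -/
def IsSnowflake {Z : Type u} {W : Type v} [MetricSpace Z] [MetricSpace W]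
    (a C : ℝ) (f : Z → W) : Prop :=
  ∀ x y : Z, C⁻¹ * dist x y ^ a ≤ dist (f x) (f y) ∧ dist (f x) (f y) ≤ C * dist x y ^ a

/-- The dyadic annulus `A(x,l) = {z : 2^{-l-1} < d(z,x) ≤ 2^{-l}}`. -/
def dyadicAnnulus {Z : Type u} [MetricSpace Z] (x : Z) (l : ℤ) : Set Z :=
  {z | (2:ℝ) ^ (-l-1) < dist z x ∧ dist z x ≤ (2:ℝ) ^ (-l)}

/-- The scale spectrum `S_x` of `Z` at `x`. -/
def scaleSpectrum {Z : Type u} [MetricSpace Z] (x : Z) : Set ℤ :=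
  {l | (dyadicAnnulus x l).Nonempty}

/-- The scale map `φ_x(l) = sup{l' : ∃ y, 2^{-l-1} < d(y,x) and f(y) ∈ A_W(f(x),l')}`. -/
def phiMap {Z : Type u} {W : Type v} [MetricSpace Z] [MetricSpace W]
    (f : Z → W) (x : Z) (l : ℤ) : ℤ :=
  sSup {l' : ℤ | ∃ y : Z, (2:ℝ) ^ (-l-1) < dist y x ∧ f y ∈ dyadicAnnulus (f x) l'}

/-- `Z` has at least three points. -/
def AtLeastThree (Z : Type u) : Prop := ∃ a b c : Z, a ≠ b ∧ a ≠ c ∧ b ≠ c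

/-- `Φ : ℝ → ℝ` is the piecewise-linear extension of `φ : ℤ → ℤ` defined on `S ⊆ ℤ`:
it agrees with `φ` on `S`, is the linear interpolation on the maximal gaps of `S`,
and has slope 1 beyond a maximal (resp. minimal) element of `S`. -/
def IsLinearExtension (S : Set ℤ) (phi : ℤ → ℤ) (Phi : ℝ → ℝ) : Prop :=
  (∀ l ∈ S, Phi l = phi l) ∧
  (∀ l₁ ∈ S, ∀ l₂ ∈ S, l₁ < l₂ → (∀ l ∈ S, l ≤ l₁ ∨ l₂ ≤ l) →
    ∀ μ ∈ Set.Icc (0:ℝ) 1,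
      Phi ((1-μ) * l₁ + μ * l₂) = (1-μ) * phi l₁ + μ * phi l₂) ∧
  (∀ M ∈ S, (∀ l ∈ S, l ≤ M) → ∀ t : ℝ, (M:ℝ) ≤ t → Phi t = phi M + (t - M)) ∧
  (∀ m ∈ S, (∀ l ∈ S, m ≤ l) → ∀ t : ℝ, t ≤ (m:ℝ) → Phi t = phi m + (t - m))

/-- Real-valued variant of `IsLinearExtension`. -/
def IsLinearExtensionR (S : Set ℤ) (phi : ℤ → ℝ) (g : ℝ → ℝ) : Prop :=
  (∀ l ∈ S, g l = phi l) ∧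
  (∀ l₁ ∈ S, ∀ l₂ ∈ S, l₁ < l₂ → (∀ l ∈ S, l ≤ l₁ ∨ l₂ ≤ l) →
    ∀ μ ∈ Set.Icc (0:ℝ) 1,
      g ((1-μ) * l₁ + μ * l₂) = (1-μ) * phi l₁ + μ * phi l₂) ∧
  (∀ M ∈ S, (∀ l ∈ S, l ≤ M) → ∀ t : ℝ, (M:ℝ) ≤ t → g t = phi M + (t - M)) ∧
  (∀ m ∈ S, (∀ l ∈ S, m ≤ l) → ∀ t : ℝ, t ≤ (m:ℝ) → g t = phi m + (t - m))

namespace Stmt15Aux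

/-! ### Dyadic level arithmetic -/

lemma two_zpow_pos (n : ℤ) : (0:ℝ) < (2:ℝ) ^ n := zpow_pos (by norm_num) n

lemma zpow_eq_rpow (n : ℤ) : (2:ℝ) ^ n = (2:ℝ) ^ (n : ℝ) := (Real.rpow_intCast 2 n).symm

lemma two_zpow_le_iff {m n : ℤ} : (2:ℝ) ^ m ≤ (2:ℝ) ^ n ↔ m ≤ n := by
  rw [zpow_eq_rpow, zpow_eq_rpow, Real.rpow_le_rpow_left_iff one_lt_two, Int.cast_le]

lemma two_zpow_lt_iff {m n : ℤ} : (2:ℝ) ^ m < (2:ℝ) ^ n ↔ m < n := by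
  rw [zpow_eq_rpow, zpow_eq_rpow, Real.rpow_lt_rpow_left_iff one_lt_two, Int.cast_lt]

/-- The dyadic level of a positive real number `r`: the unique `l` with
`2^(-l-1) < r ≤ 2^(-l)`. -/
def lv (r : ℝ) : ℤ := -⌈Real.logb 2 r⌉

lemma lv_lt {r : ℝ} (hr : 0 < r) : (2:ℝ) ^ (-(lv r) - 1) < r := by
  have h1 : ((-(lv r) - 1 : ℤ) : ℝ) < Real.logb 2 r := by
    have := Int.ceil_lt_add_one (Real.logb 2 r)
    push_cast [lv]
    linarith
  calc (2:ℝ) ^ (-(lv r) - 1) = (2:ℝ) ^ ((-(lv r) - 1 : ℤ) : ℝ) := zpow_eq_rpow _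
    _ < (2:ℝ) ^ Real.logb 2 r := by
        exact (Real.rpow_lt_rpow_left_iff one_lt_two).2 h1
    _ = r := Real.rpow_logb (by norm_num) (by norm_num) hr

lemma lv_le {r : ℝ} (hr : 0 < r) : r ≤ (2:ℝ) ^ (-(lv r)) := by
  have h1 : Real.logb 2 r ≤ ((-(lv r) : ℤ) : ℝ) := by
    have := Int.le_ceil (Real.logb 2 r)
    push_cast [lv]
    linarith
  calc r = (2:ℝ) ^ Real.logb 2 r := (Real.rpow_logb (by norm_num) (by norm_num) hr).symm
    _ ≤ (2:ℝ) ^ ((-(lv r) : ℤ) : ℝ) := (Real.rpow_le_rpow_left_iff one_lt_two).2 h1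
    _ = (2:ℝ) ^ (-(lv r)) := (zpow_eq_rpow _).symm

/-- If `2^(-n-1) < r` then `lv r ≤ n`. -/
lemma lv_le_of_lt {r : ℝ} {n : ℤ} (h : (2:ℝ) ^ (-n - 1) < r) : lv r ≤ n := by
  have hr : 0 < r := lt_trans (two_zpow_pos _) h
  have := lt_of_lt_of_le h (lv_le hr)
  have := two_zpow_lt_iff.1 this
  omega

/-- If `r ≤ 2^(-n)` then `n ≤ lv r`. -/
lemma le_lv_of_le {r : ℝ} {n : ℤ} (hr : 0 < r) (h : r ≤ (2:ℝ) ^ (-n)) : n ≤ lv r := by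
  have := lt_of_lt_of_le (lv_lt hr) h
  have := two_zpow_lt_iff.1 this
  omega

lemma mem_annulus_lv {Z : Type u} [MetricSpace Z] {x z : Z} (h : 0 < dist z x) :
    z ∈ dyadicAnnulus x (lv (dist z x)) := ⟨lv_lt h, lv_le h⟩

lemma lv_mem_spectrum {Z : Type u} [MetricSpace Z] {x z : Z} (h : 0 < dist z x) :
    lv (dist z x) ∈ scaleSpectrum x := ⟨z, mem_annulus_lv h⟩

/-! ### The control function -/

lemma etaPQS_pos {theta lam r : ℝ} (htheta : 1 ≤ theta) (hlam : 1 ≤ lam) (hr : 0 < r) :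
    0 < etaPQS theta lam r := by
  have h0 : (0:ℝ) < lam := lt_of_lt_of_le one_pos hlam
  unfold etaPQS
  split <;> exact mul_pos h0 (Real.rpow_pos_of_pos hr _)

lemma etaPQS_mono {theta lam s t : ℝ} (htheta : 1 ≤ theta) (hlam : 1 ≤ lam)
    (hs : 0 ≤ s) (hst : s ≤ t) : etaPQS theta lam s ≤ etaPQS theta lam t := by
  have h0 : (0:ℝ) ≤ lam := le_trans zero_le_one hlam
  have htheta0 : 0 < theta := lt_of_lt_of_le one_pos htheta
  unfold etaPQS
  split <;> split
  · exact mul_le_mul_of_nonneg_left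
      (Real.rpow_le_rpow hs hst (by positivity)) h0
  · rename_i h1 h2
    push_neg at h2
    have : s ^ (1/theta) ≤ 1 := Real.rpow_le_one hs (le_of_lt h1) (by positivity)
    have h3 : (1:ℝ) ≤ t ^ theta := Real.one_le_rpow h2 (le_of_lt htheta0)
    nlinarith
  · rename_i h1 h2
    exact absurd (lt_of_le_of_lt (le_trans (not_lt.1 h1) hst) h2) (by simp)
  · exact mul_le_mul_of_nonneg_left
      (Real.rpow_le_rpow hs hst (le_of_lt htheta0)) h0

/-- If `0 ≤ r ≤ 2^e` with `e ≥ 0` then `η(r) ≤ λ 2^(θ e)`. -/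
lemma etaPQS_le {theta lam r e : ℝ} (htheta : 1 ≤ theta) (hlam : 1 ≤ lam)
    (hr : 0 ≤ r) (he : 0 ≤ e) (h : r ≤ (2:ℝ) ^ e) :
    etaPQS theta lam r ≤ lam * (2:ℝ) ^ (theta * e) := by
  have h0 : (0:ℝ) ≤ lam := le_trans zero_le_one hlam
  have htheta0 : 0 < theta := lt_of_lt_of_le one_pos htheta
  have h2e : (1:ℝ) ≤ (2:ℝ) ^ (theta * e) := Real.one_le_rpow one_le_two (by positivity)
  unfold etaPQS
  split
  · rename_i h1
    have : r ^ (1/theta) ≤ 1 := Real.rpow_le_one hr (le_of_lt h1) (by positivity)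
    nlinarith
  · have : r ^ theta ≤ ((2:ℝ) ^ e) ^ theta := Real.rpow_le_rpow hr h (le_of_lt htheta0)
    have h2 : ((2:ℝ) ^ e) ^ theta = (2:ℝ) ^ (theta * e) := by
      rw [← Real.rpow_mul (by norm_num : (0:ℝ) ≤ 2), mul_comm]
    rw [h2] at this
    nlinarith

end Stmt15Aux
namespace Stmt15Aux

variable {Z : Type u} {W : Type v} [MetricSpace Z] [MetricSpace W]
variable {theta lam : ℝ} {f : Z → W}

/-! ### Quasi-symmetry inequalities in product form -/

lemma pqs_mul (hf : IsPQS theta lam f) (hinj : Function.Injective f)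
    {a b c : Z} (hbc : b ≠ c) :
    dist (f a) (f c) ≤ etaPQS theta lam (dist a c / dist b c) * dist (f b) (f c) := by
  have hd : 0 < dist (f b) (f c) := dist_pos.2 fun h => hbc (hinj h)
  exact (div_le_iff₀ hd).1 (hf a b c hbc)

/-- Main work-horse: if `dist a c ≤ 2^e * dist b c` then
`dist (f a) (f c) ≤ λ 2^(θe) * dist (f b) (f c)`. -/
lemma pqs_pow (htheta : 1 ≤ theta) (hlam : 1 ≤ lam)
    (hf : IsPQS theta lam f) (hinj : Function.Injective f)
    {a b c : Z} (hbc : b ≠ c) {e : ℝ} (he : 0 ≤ e)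
    (hd : dist a c ≤ (2:ℝ) ^ e * dist b c) :
    dist (f a) (f c) ≤ lam * (2:ℝ) ^ (theta * e) * dist (f b) (f c) := by
  have hbc' : 0 < dist b c := dist_pos.2 hbc
  have hr : dist a c / dist b c ≤ (2:ℝ) ^ e := (div_le_iff₀ hbc').2 hd
  have h1 := pqs_mul hf hinj (a := a) hbc
  have h2 := etaPQS_le htheta hlam (by positivity) he hr
  have h3 : 0 ≤ dist (f b) (f c) := dist_nonneg
  nlinarith

/-! ### The level set defining `phiMap` -/

/-- The set whose supremum is `phiMap f x l`. -/
def phiSet (f : Z → W) (x : Z) (l : ℤ) : Set ℤ :=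
  {l' : ℤ | ∃ u : Z, (2:ℝ) ^ (-l-1) < dist u x ∧ f u ∈ dyadicAnnulus (f x) l'}

lemma phiMap_eq (x : Z) (l : ℤ) : phiMap f x l = sSup (phiSet f x l) := rfl

lemma phiSet_nonempty (hinj : Function.Injective f) {x : Z} {l : ℤ}
    (h : ∃ u : Z, (2:ℝ) ^ (-l-1) < dist u x) : (phiSet f x l).Nonempty := by
  obtain ⟨u, hu⟩ := h
  have hux : 0 < dist u x := lt_trans (two_zpow_pos _) hu
  have hux' : u ≠ x := dist_pos.1 hux
  have hfu : 0 < dist (f u) (f x) := dist_pos.2 fun h => hux' (hinj h)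
  exact ⟨lv (dist (f u) (f x)), u, hu, mem_annulus_lv hfu⟩

lemma phiSet_bddAbove (htheta : 1 ≤ theta) (hlam : 1 ≤ lam)
    (hf : IsPQS theta lam f) (hinj : Function.Injective f) {x : Z} {l : ℤ}
    (h : ∃ u : Z, (2:ℝ) ^ (-l-1) < dist u x) : BddAbove (phiSet f x l) := by
  obtain ⟨u0, hu0⟩ := h
  have hu0x : 0 < dist u0 x := lt_trans (two_zpow_pos _) hu0
  have hu0x' : u0 ≠ x := dist_pos.1 hu0x
  have hD0 : 0 < dist (f u0) (f x) := dist_pos.2 fun h => hu0x' (hinj h)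
  set E : ℝ := etaPQS theta lam (dist u0 x / (2:ℝ) ^ (-l-1)) with hE
  have hEpos : 0 < E := etaPQS_pos htheta hlam (by positivity)
  refine ⟨lv (dist (f u0) (f x) / E), fun l' hl' => ?_⟩
  obtain ⟨v, hv, hfv⟩ := hl'
  have hvx : 0 < dist v x := lt_trans (two_zpow_pos _) hv
  have hvx' : v ≠ x := dist_pos.1 hvx
  have h1 := pqs_mul hf hinj (a := u0) (b := v) (c := x) hvx'
  have h2 : etaPQS theta lam (dist u0 x / dist v x) ≤ E := by
    apply etaPQS_mono htheta hlam (by positivity)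
    exact div_le_div_of_nonneg_left (le_of_lt hu0x) (two_zpow_pos _) (le_of_lt hv)
  have h3 : dist (f u0) (f x) / E ≤ dist (f v) (f x) := by
    rw [div_le_iff₀ hEpos]
    calc dist (f u0) (f x) ≤ etaPQS theta lam (dist u0 x / dist v x) * dist (f v) (f x) := h1
      _ ≤ E * dist (f v) (f x) := by
          exact mul_le_mul_of_nonneg_right h2 dist_nonneg
      _ = dist (f v) (f x) * E := mul_comm _ _
  have h4 : dist (f u0) (f x) / E ≤ (2:ℝ) ^ (-l') := le_trans h3 hfv.2
  have h5 : (0:ℝ) < dist (f u0) (f x) / E := by positivity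
  exact le_lv_of_le h5 h4

/-- The supremum is attained. -/
lemma phi_mem (htheta : 1 ≤ theta) (hlam : 1 ≤ lam)
    (hf : IsPQS theta lam f) (hinj : Function.Injective f) {x : Z} {l : ℤ}
    (h : ∃ u : Z, (2:ℝ) ^ (-l-1) < dist u x) :
    ∃ u : Z, (2:ℝ) ^ (-l-1) < dist u x ∧ f u ∈ dyadicAnnulus (f x) (phiMap f x l) :=
  Int.csSup_mem (phiSet_nonempty hinj h) (phiSet_bddAbove htheta hlam hf hinj h)

lemma le_phi (htheta : 1 ≤ theta) (hlam : 1 ≤ lam)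
    (hf : IsPQS theta lam f) (hinj : Function.Injective f) {x : Z} {l l' : ℤ}
    (h : ∃ u : Z, (2:ℝ) ^ (-l-1) < dist u x) (hl' : l' ∈ phiSet f x l) :
    l' ≤ phiMap f x l :=
  le_csSup (phiSet_bddAbove htheta hlam hf hinj h) hl'

lemma far_mono {x : Z} {l l' : ℤ} (hll' : l ≤ l')
    (h : ∃ u : Z, (2:ℝ) ^ (-l-1) < dist u x) :
    ∃ u : Z, (2:ℝ) ^ (-l'-1) < dist u x := by
  obtain ⟨u, hu⟩ := h
  exact ⟨u, lt_of_le_of_lt (two_zpow_le_iff.2 (by omega)) hu⟩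

lemma phi_mono (htheta : 1 ≤ theta) (hlam : 1 ≤ lam)
    (hf : IsPQS theta lam f) (hinj : Function.Injective f) {x : Z} {l l' : ℤ}
    (h : ∃ u : Z, (2:ℝ) ^ (-l-1) < dist u x) (hll' : l ≤ l') :
    phiMap f x l ≤ phiMap f x l' := by
  apply csSup_le_csSup (phiSet_bddAbove htheta hlam hf hinj (far_mono hll' h))
    (phiSet_nonempty hinj h)
  rintro l'' ⟨u, hu, hfu⟩
  exact ⟨u, lt_of_le_of_lt (two_zpow_le_iff.2 (by omega)) hu, hfu⟩

end Stmt15Aux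
namespace Stmt15Aux

variable {Z : Type u} {W : Type v} [MetricSpace Z] [MetricSpace W]
variable {theta lam : ℝ} {f : Z → W}

/-- Extracting an exponent inequality from `2^u < λ * 2^v`. -/
lemma exp_lt_of_lt {lam u v : ℝ} (hlam : 0 < lam) (h : (2:ℝ) ^ u < lam * (2:ℝ) ^ v) :
    u < Real.logb 2 lam + v := by
  have h1 : lam * (2:ℝ) ^ v = (2:ℝ) ^ (Real.logb 2 lam + v) := by
    rw [Real.rpow_add (by norm_num : (0:ℝ) < 2),
      Real.rpow_logb (by norm_num) (by norm_num) hlam]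
  rw [h1] at h
  exact (Real.rpow_lt_rpow_left_iff one_lt_two).1 h

/-- Growth bound: for `l ∈ S_x` and `l ≤ l'`,
`φ_x(l') ≤ φ_x(l) + θ(l'-l+1) + log₂ λ + 1`. -/
lemma phi_growth (htheta : 1 ≤ theta) (hlam : 1 ≤ lam)
    (hf : IsPQS theta lam f) (hinj : Function.Injective f) {x : Z} {l l' : ℤ}
    (hl : l ∈ scaleSpectrum x) (hll' : l ≤ l') :
    (phiMap f x l' : ℝ) ≤ (phiMap f x l : ℝ)
      + theta * ((l' : ℝ) - (l : ℝ) + 1) + Real.logb 2 lam + 1 := by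
  obtain ⟨z, hz1, hz2⟩ := hl
  have hzfar : ∃ u : Z, (2:ℝ) ^ (-l-1) < dist u x := ⟨z, hz1⟩
  have hzfar' : ∃ u : Z, (2:ℝ) ^ (-l'-1) < dist u x := far_mono hll' hzfar
  obtain ⟨u', hu'1, hu'2⟩ := phi_mem htheta hlam hf hinj hzfar'
  have hu'x : u' ≠ x := dist_pos.1 (lt_trans (two_zpow_pos _) hu'1)
  have hzx : 0 < dist z x := lt_trans (two_zpow_pos _) hz1
  -- the image level of z
  have hfz : 0 < dist (f z) (f x) := dist_pos.2 fun h => (dist_pos.1 hzx) (hinj h)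
  set lz : ℤ := lv (dist (f z) (f x)) with hlz
  have hlzmem : lz ∈ phiSet f x l := ⟨z, hz1, mem_annulus_lv hfz⟩
  have hlzle : lz ≤ phiMap f x l := le_phi htheta hlam hf hinj hzfar hlzmem
  -- quasi-symmetry estimate
  set e : ℝ := (l' : ℝ) - (l : ℝ) + 1 with he
  have he0 : (0:ℝ) ≤ e := by
    have : (l:ℝ) ≤ (l':ℝ) := by exact_mod_cast hll'
    linarith
  have hdist : dist z x ≤ (2:ℝ) ^ e * dist u' x := by
    have h1 : dist z x ≤ (2:ℝ) ^ (-l) := hz2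
    have h2 : (2:ℝ) ^ (-l) = (2:ℝ) ^ e * (2:ℝ) ^ ((-l'-1 : ℤ) : ℝ) := by
      rw [zpow_eq_rpow, ← Real.rpow_add (by norm_num : (0:ℝ) < 2)]
      congr 1
      push_cast
      ring
    have h3 : (2:ℝ) ^ ((-l'-1 : ℤ) : ℝ) ≤ dist u' x := by
      rw [← zpow_eq_rpow]; exact le_of_lt hu'1
    calc dist z x ≤ (2:ℝ) ^ (-l) := h1
      _ = (2:ℝ) ^ e * (2:ℝ) ^ ((-l'-1 : ℤ) : ℝ) := h2
      _ ≤ (2:ℝ) ^ e * dist u' x := by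
          exact mul_le_mul_of_nonneg_left h3 (le_of_lt (Real.rpow_pos_of_pos two_pos e))
  have hQS := pqs_pow htheta hlam hf hinj hu'x he0 hdist
  -- combine
  have hup : dist (f u') (f x) ≤ (2:ℝ) ^ ((-(phiMap f x l') : ℤ) : ℝ) := by
    rw [← zpow_eq_rpow]; exact hu'2.2
  have hlow : (2:ℝ) ^ ((-lz - 1 : ℤ) : ℝ) < dist (f z) (f x) := by
    rw [← zpow_eq_rpow]; exact (mem_annulus_lv hfz).1
  have hchain : (2:ℝ) ^ ((-lz - 1 : ℤ) : ℝ)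
      < lam * (2:ℝ) ^ (theta * e + ((-(phiMap f x l') : ℤ) : ℝ)) := by
    have hlam0 : (0:ℝ) < lam := lt_of_lt_of_le one_pos hlam
    have hkey : lam * (2:ℝ) ^ (theta * e) * dist (f u') (f x) ≤
        lam * (2:ℝ) ^ (theta * e) * (2:ℝ) ^ ((-(phiMap f x l') : ℤ) : ℝ) :=
      mul_le_mul_of_nonneg_left hup (by positivity)
    rw [Real.rpow_add (by norm_num : (0:ℝ) < 2)]
    calc (2:ℝ) ^ ((-lz - 1 : ℤ) : ℝ) < dist (f z) (f x) := hlow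
      _ ≤ lam * (2:ℝ) ^ (theta * e) * (2:ℝ) ^ ((-(phiMap f x l') : ℤ) : ℝ) :=
          le_trans hQS hkey
      _ = lam * ((2:ℝ) ^ (theta * e) * (2:ℝ) ^ ((-(phiMap f x l') : ℤ) : ℝ)) := by ring
  have := exp_lt_of_lt (lt_of_lt_of_le one_pos hlam) hchain
  have hcast : ((-lz - 1 : ℤ) : ℝ) = -(lz:ℝ) - 1 := by push_cast; ring
  have hcast2 : ((-(phiMap f x l') : ℤ) : ℝ) = -((phiMap f x l' : ℤ) : ℝ) := by push_cast; ring
  rw [hcast, hcast2] at this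
  have hlzle' : (lz : ℝ) ≤ ((phiMap f x l : ℤ) : ℝ) := by exact_mod_cast hlzle
  linarith

/-- Constancy of `φ_x` across gaps of the spectrum. -/
lemma phi_gapconst {x : Z} {p n : ℤ} (hpn : p ≤ n)
    (h : ∀ j ∈ scaleSpectrum x, j ≤ p ∨ n < j) :
    phiMap f x n = phiMap f x p := by
  have hsets : phiSet f x n = phiSet f x p := by
    ext l'
    constructor
    · rintro ⟨u, hu, hfu⟩
      have hux : 0 < dist u x := lt_trans (two_zpow_pos _) hu
      have hjS : lv (dist u x) ∈ scaleSpectrum x := lv_mem_spectrum hux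
      have hj1 : lv (dist u x) ≤ n := lv_le_of_lt hu
      have hj2 : lv (dist u x) ≤ p := by
        rcases h _ hjS with h' | h'
        · exact h'
        · omega
      refine ⟨u, ?_, hfu⟩
      calc (2:ℝ) ^ (-p-1) ≤ (2:ℝ) ^ (-(lv (dist u x))-1) := two_zpow_le_iff.2 (by omega)
        _ < dist u x := lv_lt hux
    · rintro ⟨u, hu, hfu⟩
      exact ⟨u, lt_of_le_of_lt (two_zpow_le_iff.2 (by omega)) hu, hfu⟩
  rw [phiMap_eq, phiMap_eq, hsets]

/-- Comparison lemma: if `d(x,y) ≤ 2^(-l)` and some point is `l`-far from `x`, then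
`φ_x(l) ≤ φ_y(l+3) + 2θ + log₂ λ + 1`, and moreover some point is `(l+3)`-far from `y`. -/
lemma phi_compare (htheta : 1 ≤ theta) (hlam : 1 ≤ lam)
    (hf : IsPQS theta lam f) (hinj : Function.Injective f) {x y : Z} {l : ℤ}
    (hxy : x ≠ y) (hd : dist x y ≤ (2:ℝ) ^ (-l))
    (hfar : ∃ u : Z, (2:ℝ) ^ (-l-1) < dist u x) :
    (∃ v : Z, (2:ℝ) ^ (-(l+3)-1) < dist v y) ∧
    (phiMap f x l : ℝ) ≤ (phiMap f y (l+3) : ℝ)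
      + (theta * 2 + Real.logb 2 lam + 1) := by
  obtain ⟨u, hu1, hu2⟩ := phi_mem htheta hlam hf hinj hfar
  have hux : 0 < dist u x := lt_trans (two_zpow_pos _) hu1
  have hux' : u ≠ x := dist_pos.1 hux
  set phi := phiMap f x l with hphi
  -- key numeric facts
  have hpow : (2:ℝ) ^ (-(l+3)-1) = (2:ℝ) ^ (-l-4) := by
    rw [show (-(l+3)-1 : ℤ) = -l-4 by ring]
  -- we produce a witness `v` far from `y` whose image is close to `f y`
  have hmain : ∃ v : Z, ((2:ℝ) ^ (-(l+3)-1) < dist v y) ∧ v ≠ y ∧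
      dist (f v) (f y) ≤ lam * (2:ℝ) ^ (theta * 2) * dist (f u) (f x) := by
    by_cases hcase : (2:ℝ) ^ (-l-4) < dist u y
    · refine ⟨u, by rw [hpow]; exact hcase, dist_pos.1 (lt_trans (two_zpow_pos _) hcase), ?_⟩
      -- dist u y ≤ 4 * dist u x
      have h1 : dist u y ≤ (2:ℝ) ^ (2:ℝ) * dist u x := by
        have h2 : dist u y ≤ dist u x + dist x y := dist_triangle u x y
        have h3 : dist x y ≤ (2:ℝ) ^ (-l) := hd
        have h4 : (2:ℝ) ^ (-l) = 2 * (2:ℝ) ^ (-l-1) := by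
          rw [show (-l : ℤ) = 1 + (-l-1) by ring, zpow_add₀ (by norm_num : (2:ℝ) ≠ 0)]
          norm_num
        have h5 : (2:ℝ) ^ (2:ℝ) = 4 := by
          rw [show (2:ℝ) = ((2:ℕ):ℝ) by norm_num, Real.rpow_natCast]; norm_num
        rw [h5]
        nlinarith [hu1]
      have := pqs_pow htheta hlam hf hinj (a := y) (b := x) (c := u) hux'.symm
        (by norm_num : (0:ℝ) ≤ 2) (by rw [dist_comm y u, dist_comm x u]; exact h1)
      rw [dist_comm (f u) (f y), dist_comm (f u) (f x)]
      exact this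
    · push_neg at hcase
      have hxyfar : (2:ℝ) ^ (-l-4) < dist x y := by
        have h1 : (2:ℝ) ^ (-l-1) = 8 * (2:ℝ) ^ (-l-4) := by
          rw [show (-l-1 : ℤ) = 3 + (-l-4) by ring, zpow_add₀ (by norm_num : (2:ℝ) ≠ 0)]
          norm_num
        have h2 : dist u x ≤ dist u y + dist x y := by
          calc dist u x ≤ dist u y + dist y x := dist_triangle u y x
            _ = dist u y + dist x y := by rw [dist_comm y x]
        have h4 : dist u y ≤ (2:ℝ) ^ (-l-4) := hcase
        nlinarith [hu1, two_zpow_pos (-l-4)]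
      refine ⟨x, by rw [hpow]; exact hxyfar, hxy, ?_⟩
      have h1 : dist y x ≤ (2:ℝ) ^ (2:ℝ) * dist u x := by
        have h5 : (2:ℝ) ^ (2:ℝ) = 4 := by
          rw [show (2:ℝ) = ((2:ℕ):ℝ) by norm_num, Real.rpow_natCast]; norm_num
        have h4 : (2:ℝ) ^ (-l) = 2 * (2:ℝ) ^ (-l-1) := by
          rw [show (-l : ℤ) = 1 + (-l-1) by ring, zpow_add₀ (by norm_num : (2:ℝ) ≠ 0)]
          norm_num
        rw [h5, dist_comm y x]
        nlinarith [hu1]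
      have := pqs_pow htheta hlam hf hinj (a := y) (b := u) (c := x) hux'
        (by norm_num : (0:ℝ) ≤ 2) h1
      rw [dist_comm (f x) (f y)]
      exact this
  obtain ⟨v, hv1, hv2, hv3⟩ := hmain
  refine ⟨⟨v, hv1⟩, ?_⟩
  have hfv : 0 < dist (f v) (f y) := dist_pos.2 fun h => hv2 (hinj h)
  set lv' : ℤ := lv (dist (f v) (f y)) with hlv'
  have hmem : lv' ∈ phiSet f y (l+3) := ⟨v, hv1, mem_annulus_lv hfv⟩
  have hle : lv' ≤ phiMap f y (l+3) := le_phi htheta hlam hf hinj ⟨v, hv1⟩ hmem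
  -- extract exponent inequality
  have hup : dist (f u) (f x) ≤ (2:ℝ) ^ ((-phi : ℤ) : ℝ) := by
    rw [← zpow_eq_rpow]; exact hu2.2
  have hlow : (2:ℝ) ^ ((-lv' - 1 : ℤ) : ℝ) < dist (f v) (f y) := by
    rw [← zpow_eq_rpow]; exact (mem_annulus_lv hfv).1
  have hchain : (2:ℝ) ^ ((-lv' - 1 : ℤ) : ℝ)
      < lam * (2:ℝ) ^ (theta * 2 + ((-phi : ℤ) : ℝ)) := by
    rw [Real.rpow_add (by norm_num : (0:ℝ) < 2)]
    have hlam0 : (0:ℝ) < lam := lt_of_lt_of_le one_pos hlam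
    have h2 : (0:ℝ) < (2:ℝ) ^ (theta*2) := Real.rpow_pos_of_pos two_pos _
    calc (2:ℝ) ^ ((-lv' - 1 : ℤ) : ℝ) < dist (f v) (f y) := hlow
      _ ≤ lam * (2:ℝ) ^ (theta * 2) * dist (f u) (f x) := hv3
      _ ≤ lam * ((2:ℝ) ^ (theta * 2) * (2:ℝ) ^ ((-phi : ℤ) : ℝ)) := by
          have hkey : lam * (2:ℝ) ^ (theta * 2) * dist (f u) (f x) ≤
              lam * (2:ℝ) ^ (theta * 2) * (2:ℝ) ^ ((-phi : ℤ) : ℝ) :=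
            mul_le_mul_of_nonneg_left hup (by positivity)
          linarith
  have := exp_lt_of_lt (lt_of_lt_of_le one_pos hlam) hchain
  have h1 : ((-lv' - 1 : ℤ) : ℝ) = -(lv' : ℝ) - 1 := by push_cast; ring
  have h2 : ((-phi : ℤ) : ℝ) = -((phi : ℤ) : ℝ) := by push_cast; ring
  rw [h1, h2] at this
  have hle' : (lv' : ℝ) ≤ ((phiMap f y (l+3) : ℤ) : ℝ) := by exact_mod_cast hle
  linarith

/-- Transfer of spectrum between nearby points. -/
lemma spec_transfer {x y : Z} {l : ℤ}
    (hl : l ∈ scaleSpectrum x) (hd : dist x y ≤ (2:ℝ) ^ (-l-2)) :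
    ∃ j ∈ scaleSpectrum y, l - 1 ≤ j ∧ j ≤ l + 1 := by
  obtain ⟨z, hz1, hz2⟩ := hl
  have h8 : (2:ℝ) ^ (-l-1) = 2 * (2:ℝ) ^ (-l-2) := by
    rw [show (-l-1 : ℤ) = 1 + (-l-2) by ring, zpow_add₀ (by norm_num : (2:ℝ) ≠ 0)]
    norm_num
  have hzy_low : (2:ℝ) ^ (-l-2) < dist z y := by
    have := dist_triangle z y x
    have h1 := dist_triangle z x y  -- unused
    have h2 : dist z x - dist x y ≤ dist z y := by
      have := dist_triangle z y x
      rw [dist_comm y x] at this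
      linarith
    nlinarith [hz1]
  have hzy_hi : dist z y ≤ (2:ℝ) ^ (-(l-1)) := by
    have h1 : dist z y ≤ dist z x + dist x y := dist_triangle z x y
    have h2 : (2:ℝ) ^ (-(l-1)) = 2 * (2:ℝ) ^ (-l) := by
      rw [show (-(l-1) : ℤ) = 1 + (-l) by ring, zpow_add₀ (by norm_num : (2:ℝ) ≠ 0)]
      norm_num
    have h3 : (2:ℝ) ^ (-l-2) ≤ (2:ℝ) ^ (-l) := two_zpow_le_iff.2 (by omega)
    nlinarith [hz2]
  have hzy : 0 < dist z y := lt_trans (two_zpow_pos _) hzy_low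
  refine ⟨lv (dist z y), lv_mem_spectrum hzy, ?_, ?_⟩
  · exact le_lv_of_le hzy hzy_hi
  · have : lv (dist z y) ≤ l + 1 := by
      apply lv_le_of_lt
      calc (2:ℝ) ^ (-(l+1)-1) ≤ (2:ℝ) ^ (-l-2) := two_zpow_le_iff.2 (by omega)
        _ < dist z y := hzy_low
    exact this

/-- If `m` is a lower bound for the spectrum at `x`, every point is within `2^(-m)` of `x`. -/
lemma min_bound {x : Z} {m : ℤ} (hm : ∀ j ∈ scaleSpectrum x, m ≤ j) (z : Z) :
    dist z x ≤ (2:ℝ) ^ (-m) := by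
  by_cases hz : z = x
  · rw [hz, dist_self]; exact le_of_lt (two_zpow_pos _)
  · have hzx : 0 < dist z x := dist_pos.2 hz
    have h1 := hm _ (lv_mem_spectrum hzx)
    calc dist z x ≤ (2:ℝ) ^ (-(lv (dist z x))) := lv_le hzx
      _ ≤ (2:ℝ) ^ (-m) := two_zpow_le_iff.2 (by omega)

end Stmt15Aux
namespace Stmt15Aux

variable {Z : Type u} {W : Type v} [MetricSpace Z] [MetricSpace W]
variable {theta lam : ℝ} {f : Z → W}

/-- Evaluation of the linear extension inside a maximal gap `[p,q]`. -/
lemma ext_eval_gap {x : Z} {Phi : ℝ → ℝ}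
    (hext : IsLinearExtension (scaleSpectrum x) (phiMap f x) Phi)
    {p q : ℤ} (hp : p ∈ scaleSpectrum x) (hq : q ∈ scaleSpectrum x) (hpq : p < q)
    (hgap : ∀ l ∈ scaleSpectrum x, l ≤ p ∨ q ≤ l)
    {s : ℝ} (hps : (p:ℝ) ≤ s) (hsq : s ≤ (q:ℝ)) :
    Phi s = (1 - (s - p)/((q:ℝ) - p)) * (phiMap f x p : ℝ)
      + ((s - p)/((q:ℝ) - p)) * (phiMap f x q : ℝ) := by
  have hpq' : (p:ℝ) < (q:ℝ) := by exact_mod_cast hpq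
  have hg : ((q:ℝ) - p) ≠ 0 := by linarith
  set μ : ℝ := (s - p)/((q:ℝ) - p) with hμ
  have hμ0 : 0 ≤ μ := div_nonneg (by linarith) (by linarith)
  have hμ1 : μ ≤ 1 := (div_le_one (by linarith)).2 (by linarith)
  have hμqp : μ * ((q:ℝ) - p) = s - p := div_mul_cancel₀ _ hg
  have harg : (1-μ)*(p:ℝ) + μ*(q:ℝ) = s := by linear_combination hμqp
  have := hext.2.1 p hp q hq hpq hgap μ ⟨hμ0, hμ1⟩
  rw [harg] at this
  exact this

section ExtBounds

variable (htheta : 1 ≤ theta) (hlam : 1 ≤ lam)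
  (hf : IsPQS theta lam f) (hinj : Function.Injective f)
  {x : Z} {Phi : ℝ → ℝ}
  (hext : IsLinearExtension (scaleSpectrum x) (phiMap f x) Phi)
  {s : ℝ}

include htheta hlam hf hinj hext

/-- (A): lower bound by the value at the greatest spectrum element `≤ s`. -/
lemma ext_lower_p {p : ℤ} (hp : p ∈ scaleSpectrum x) (hps : (p:ℝ) ≤ s)
    (hmax : ∀ j ∈ scaleSpectrum x, (j:ℝ) ≤ s → j ≤ p) :
    (phiMap f x p : ℝ) ≤ Phi s := by
  by_cases hQ : ∃ j ∈ scaleSpectrum x, s ≤ (j:ℝ)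
  · obtain ⟨q, ⟨hqS, hqs⟩, hqmin⟩ := Int.exists_least_of_bdd
      (⟨⌈s⌉, fun z hz => Int.ceil_le.2 hz.2⟩ :
        ∃ b : ℤ, ∀ z : ℤ, (z ∈ scaleSpectrum x ∧ s ≤ (z:ℝ)) → b ≤ z)
      (let ⟨j, hj1, hj2⟩ := hQ; ⟨j, hj1, hj2⟩)
    rcases eq_or_lt_of_le (show p ≤ q by exact_mod_cast le_trans hps hqs) with heq | hlt
    · subst heq
      have hsp : s = (p:ℝ) := by linarith
      rw [hsp, hext.1 p hp]
    · have hgap : ∀ l ∈ scaleSpectrum x, l ≤ p ∨ q ≤ l := fun l hl => by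
        by_cases h : (l:ℝ) ≤ s
        · exact Or.inl (hmax l hl h)
        · exact Or.inr (hqmin l ⟨hl, le_of_not_ge h⟩)
      have heval := ext_eval_gap hext hp hqS hlt hgap hps hqs
      have hmono : phiMap f x p ≤ phiMap f x q := by
        obtain ⟨z, hz1, _⟩ := hp
        exact phi_mono htheta hlam hf hinj ⟨z, hz1⟩ (le_of_lt hlt)
      have hmono' : ((phiMap f x p : ℤ) : ℝ) ≤ ((phiMap f x q : ℤ) : ℝ) := by
        exact_mod_cast hmono
      have hpq' : (p:ℝ) < (q:ℝ) := by exact_mod_cast hlt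
      have hμ0 : 0 ≤ (s - p)/((q:ℝ) - p) := div_nonneg (by linarith) (by linarith)
      have hμ1 : (s - p)/((q:ℝ) - p) ≤ 1 := (div_le_one (by linarith)).2 (by linarith)
      rw [heval]
      nlinarith
  · push_neg at hQ
    have hmax' : ∀ l ∈ scaleSpectrum x, l ≤ p :=
      fun l hl => hmax l hl (le_of_lt (hQ l hl))
    rw [hext.2.2.1 p hp hmax' s hps]
    have : ((phiMap f x p : ℤ) : ℝ) ≤ ((phiMap f x p : ℤ) : ℝ) + (s - p) := by linarith
    linarith

/-- (E): upper bound from the greatest spectrum element `≤ s`. -/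
lemma ext_upper_p {p : ℤ} (hp : p ∈ scaleSpectrum x) (hps : (p:ℝ) ≤ s)
    (hmax : ∀ j ∈ scaleSpectrum x, (j:ℝ) ≤ s → j ≤ p) :
    Phi s ≤ (phiMap f x p : ℝ) + theta * (s - p) + theta + (Real.logb 2 lam + 1) := by
  have hL : 0 ≤ Real.logb 2 lam + 1 := by
    have := Real.logb_nonneg one_lt_two hlam
    linarith
  by_cases hQ : ∃ j ∈ scaleSpectrum x, s ≤ (j:ℝ)
  · obtain ⟨q, ⟨hqS, hqs⟩, hqmin⟩ := Int.exists_least_of_bdd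
      (⟨⌈s⌉, fun z hz => Int.ceil_le.2 hz.2⟩ :
        ∃ b : ℤ, ∀ z : ℤ, (z ∈ scaleSpectrum x ∧ s ≤ (z:ℝ)) → b ≤ z)
      (let ⟨j, hj1, hj2⟩ := hQ; ⟨j, hj1, hj2⟩)
    rcases eq_or_lt_of_le (show p ≤ q by exact_mod_cast le_trans hps hqs) with heq | hlt
    · subst heq
      have hsp : s = (p:ℝ) := by linarith
      rw [hsp, hext.1 p hp]
      nlinarith
    · have hgap : ∀ l ∈ scaleSpectrum x, l ≤ p ∨ q ≤ l := fun l hl => by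
        by_cases h : (l:ℝ) ≤ s
        · exact Or.inl (hmax l hl h)
        · exact Or.inr (hqmin l ⟨hl, le_of_not_ge h⟩)
      have heval := ext_eval_gap hext hp hqS hlt hgap hps hqs
      have hgrow := phi_growth htheta hlam hf hinj hp (le_of_lt hlt)
      have hpq' : (p:ℝ) < (q:ℝ) := by exact_mod_cast hlt
      set μ : ℝ := (s - p)/((q:ℝ) - p) with hμ
      have hμ0 : 0 ≤ μ := div_nonneg (by linarith) (by linarith)
      have hμ1 : μ ≤ 1 := (div_le_one (by linarith)).2 (by linarith)
      have hμqp : μ * ((q:ℝ) - p) = s - p := div_mul_cancel₀ _ (by linarith)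
      rw [heval]
      have h1 : μ * ((phiMap f x q : ℝ) - (phiMap f x p : ℝ)) ≤
          μ * (theta * ((q:ℝ) - p) + theta + (Real.logb 2 lam + 1)) := by
        apply mul_le_mul_of_nonneg_left _ hμ0
        have : ((q:ℝ) - (p:ℝ) + 1) = ((q:ℝ) - p) + 1 := by ring
        linarith [hgrow]
      have h2 : μ * (theta * ((q:ℝ) - p)) = theta * (s - p) := by
        rw [show μ * (theta * ((q:ℝ) - p)) = theta * (μ * ((q:ℝ) - p)) by ring, hμqp]
      have h3 : μ * (theta + (Real.logb 2 lam + 1)) ≤ theta + (Real.logb 2 lam + 1) := by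
        nlinarith
      nlinarith
  · push_neg at hQ
    have hmax' : ∀ l ∈ scaleSpectrum x, l ≤ p :=
      fun l hl => hmax l hl (le_of_lt (hQ l hl))
    rw [hext.2.2.1 p hp hmax' s hps]
    nlinarith

/-- (B): lower bound from the least spectrum element `≥ s`. -/
lemma ext_lower_q {q : ℤ} (hq : q ∈ scaleSpectrum x) (hsq : s ≤ (q:ℝ))
    (hmin : ∀ j ∈ scaleSpectrum x, s ≤ (j:ℝ) → q ≤ j) :
    (phiMap f x q : ℝ) - theta * ((q:ℝ) - s) - theta - (Real.logb 2 lam + 1) ≤ Phi s := by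
  have hL : 0 ≤ Real.logb 2 lam + 1 := by
    have := Real.logb_nonneg one_lt_two hlam
    linarith
  by_cases hP : ∃ j ∈ scaleSpectrum x, (j:ℝ) ≤ s
  · obtain ⟨p, ⟨hpS, hps⟩, hpmax⟩ := Int.exists_greatest_of_bdd
      (⟨⌊s⌋, fun z hz => Int.le_floor.2 hz.2⟩ :
        ∃ b : ℤ, ∀ z : ℤ, (z ∈ scaleSpectrum x ∧ (z:ℝ) ≤ s) → z ≤ b)
      (let ⟨j, hj1, hj2⟩ := hP; ⟨j, hj1, hj2⟩)
    rcases eq_or_lt_of_le (show p ≤ q by exact_mod_cast le_trans hps hsq) with heq | hlt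
    · subst heq
      have hsq' : s = (p:ℝ) := by linarith
      rw [hsq', hext.1 p hq]
      nlinarith
    · have hgap : ∀ l ∈ scaleSpectrum x, l ≤ p ∨ q ≤ l := fun l hl => by
        by_cases h : (l:ℝ) ≤ s
        · exact Or.inl (hpmax l ⟨hl, h⟩)
        · exact Or.inr (hmin l hl (le_of_not_ge h))
      have heval := ext_eval_gap hext hpS hq hlt hgap hps hsq
      have hgrow := phi_growth htheta hlam hf hinj hpS (le_of_lt hlt)
      have hpq' : (p:ℝ) < (q:ℝ) := by exact_mod_cast hlt
      set μ : ℝ := (s - p)/((q:ℝ) - p) with hμ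
      have hμ0 : 0 ≤ μ := div_nonneg (by linarith) (by linarith)
      have hμ1 : μ ≤ 1 := (div_le_one (by linarith)).2 (by linarith)
      have hμqp : μ * ((q:ℝ) - p) = s - p := div_mul_cancel₀ _ (by linarith)
      rw [heval]
      have h1 : (1 - μ) * ((phiMap f x q : ℝ) - (phiMap f x p : ℝ)) ≤
          (1 - μ) * (theta * ((q:ℝ) - p) + theta + (Real.logb 2 lam + 1)) := by
        apply mul_le_mul_of_nonneg_left _ (by linarith)
        have : ((q:ℝ) - (p:ℝ) + 1) = ((q:ℝ) - p) + 1 := by ring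
        linarith [hgrow]
      have h2 : (1 - μ) * (theta * ((q:ℝ) - p)) = theta * ((q:ℝ) - s) := by
        have : (1 - μ) * ((q:ℝ) - p) = (q:ℝ) - s := by
          have : μ * ((q:ℝ) - p) = s - p := hμqp
          nlinarith
        rw [show (1 - μ) * (theta * ((q:ℝ) - p)) = theta * ((1-μ) * ((q:ℝ) - p)) by ring,
          this]
      have h3 : (1 - μ) * (theta + (Real.logb 2 lam + 1)) ≤ theta + (Real.logb 2 lam + 1) := by
        nlinarith
      nlinarith
  · push_neg at hP
    have hmin' : ∀ l ∈ scaleSpectrum x, q ≤ l :=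
      fun l hl => hmin l hl (le_of_lt (hP l hl))
    rw [hext.2.2.2 q hq hmin' s hsq]
    nlinarith

/-- (E'): upper bound by the value at the least spectrum element `≥ s`. -/
lemma ext_upper_q {q : ℤ} (hq : q ∈ scaleSpectrum x) (hsq : s ≤ (q:ℝ))
    (hmin : ∀ j ∈ scaleSpectrum x, s ≤ (j:ℝ) → q ≤ j) :
    Phi s ≤ (phiMap f x q : ℝ) := by
  by_cases hP : ∃ j ∈ scaleSpectrum x, (j:ℝ) ≤ s
  · obtain ⟨p, ⟨hpS, hps⟩, hpmax⟩ := Int.exists_greatest_of_bdd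
      (⟨⌊s⌋, fun z hz => Int.le_floor.2 hz.2⟩ :
        ∃ b : ℤ, ∀ z : ℤ, (z ∈ scaleSpectrum x ∧ (z:ℝ) ≤ s) → z ≤ b)
      (let ⟨j, hj1, hj2⟩ := hP; ⟨j, hj1, hj2⟩)
    rcases eq_or_lt_of_le (show p ≤ q by exact_mod_cast le_trans hps hsq) with heq | hlt
    · subst heq
      have hsq' : s = (p:ℝ) := by linarith
      rw [hsq', hext.1 p hq]
    · have hgap : ∀ l ∈ scaleSpectrum x, l ≤ p ∨ q ≤ l := fun l hl => by
        by_cases h : (l:ℝ) ≤ s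
        · exact Or.inl (hpmax l ⟨hl, h⟩)
        · exact Or.inr (hmin l hl (le_of_not_ge h))
      have heval := ext_eval_gap hext hpS hq hlt hgap hps hsq
      have hmono : phiMap f x p ≤ phiMap f x q := by
        obtain ⟨z, hz1, _⟩ := hpS
        exact phi_mono htheta hlam hf hinj ⟨z, hz1⟩ (le_of_lt hlt)
      have hmono' : ((phiMap f x p : ℤ) : ℝ) ≤ ((phiMap f x q : ℤ) : ℝ) := by
        exact_mod_cast hmono
      have hpq' : (p:ℝ) < (q:ℝ) := by exact_mod_cast hlt
      have hμ0 : 0 ≤ (s - p)/((q:ℝ) - p) := div_nonneg (by linarith) (by linarith)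
      have hμ1 : (s - p)/((q:ℝ) - p) ≤ 1 := (div_le_one (by linarith)).2 (by linarith)
      rw [heval]
      nlinarith
  · push_neg at hP
    have hmin' : ∀ l ∈ scaleSpectrum x, q ≤ l :=
      fun l hl => hmin l hl (le_of_lt (hP l hl))
    rw [hext.2.2.2 q hq hmin' s hsq]
    linarith

/-- (F): lower bound from any integer `n ≥ s` whose far set is nonempty. -/
lemma ext_lower_far {n : ℤ} (hsn : s ≤ (n:ℝ))
    (hfar : ∃ v : Z, (2:ℝ) ^ (-n-1) < dist v x) :
    (phiMap f x n : ℝ) - theta * ((n:ℝ) - s) - 2*theta - 2*(Real.logb 2 lam + 1)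
      ≤ Phi s := by
  have hL : 0 ≤ Real.logb 2 lam + 1 := by
    have := Real.logb_nonneg one_lt_two hlam
    linarith
  obtain ⟨v, hv⟩ := hfar
  have hvx : 0 < dist v x := lt_trans (two_zpow_pos _) hv
  have hj0S : lv (dist v x) ∈ scaleSpectrum x := lv_mem_spectrum hvx
  have hj0n : lv (dist v x) ≤ n := lv_le_of_lt hv
  by_cases hcase : ∃ j ∈ scaleSpectrum x, s ≤ (j:ℝ) ∧ j ≤ n
  · obtain ⟨q, ⟨hqS, hqs, hqn⟩, hqmin⟩ := Int.exists_least_of_bdd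
      (⟨⌈s⌉, fun z hz => Int.ceil_le.2 hz.2.1⟩ :
        ∃ b : ℤ, ∀ z : ℤ, (z ∈ scaleSpectrum x ∧ s ≤ (z:ℝ) ∧ z ≤ n) → b ≤ z)
      hcase
    have hqmin' : ∀ j ∈ scaleSpectrum x, s ≤ (j:ℝ) → q ≤ j := by
      intro j hj hjs
      by_cases hjn : j ≤ n
      · exact hqmin j ⟨hj, hjs, hjn⟩
      · push_neg at hjn
        omega
    have hB := ext_lower_q htheta hlam hf hinj hext hqS hqs hqmin'
    have hgrow := phi_growth htheta hlam hf hinj hqS hqn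
    have hqn' : (q:ℝ) ≤ (n:ℝ) := by exact_mod_cast hqn
    linarith
  · -- no spectrum point in `[s, n]`; the value at `n` equals the value at the greatest
    -- spectrum element `≤ s`.
    have hj0s : (lv (dist v x) : ℝ) ≤ s := by
      by_contra h
      push_neg at h
      exact hcase ⟨lv (dist v x), hj0S, le_of_lt h, hj0n⟩
    obtain ⟨p, ⟨hpS, hps⟩, hpmax⟩ := Int.exists_greatest_of_bdd
      (⟨⌊s⌋, fun z hz => Int.le_floor.2 hz.2⟩ :
        ∃ b : ℤ, ∀ z : ℤ, (z ∈ scaleSpectrum x ∧ (z:ℝ) ≤ s) → z ≤ b)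
      ⟨lv (dist v x), hj0S, hj0s⟩
    have hpn : p ≤ n := by
      have h1 : (p:ℝ) ≤ (n:ℝ) := le_trans hps hsn
      exact_mod_cast h1
    have hgapS : ∀ j ∈ scaleSpectrum x, j ≤ p ∨ n < j := by
      intro j hj
      by_cases h : (j:ℝ) ≤ s
      · exact Or.inl (hpmax j ⟨hj, h⟩)
      · push_neg at h
        right
        by_contra hjn
        push_neg at hjn
        exact hcase ⟨j, hj, le_of_lt h, hjn⟩
    have hconst : phiMap f x n = phiMap f x p := phi_gapconst hpn hgapS
    have hA := ext_lower_p htheta hlam hf hinj hext hpS hps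
      (fun j hj hjs => hpmax j ⟨hj, hjs⟩)
    rw [hconst]
    nlinarith

end ExtBounds

end Stmt15Aux
namespace Stmt15Aux

/-- Pure real-arithmetic comparison of two linear interpolations over nearby gaps. -/
lemma interp_compare {A B A' B' P Q P' Q' s K1 K2 th L : ℝ}
    (hK12 : K1 ≤ K2)
    (hPQ : P < Q) (hP'Q' : P' < Q') (hPs : P ≤ s) (hsQ : s ≤ Q)
    (hP's : P' ≤ s) (hsQ' : s ≤ Q')
    (hAA' : A ≤ A' + K1) (hBB' : B ≤ B' + K2)
    (hBA0 : 0 ≤ B' - A') (hBAub : B' - A' ≤ th * (Q' - P' + 1) + L)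
    (hgygx : Q' - P' ≤ (Q - P) + 2) (hpp' : P - P' ≥ -1)
    (hgy1 : 1 ≤ Q' - P') (hth : 0 ≤ th) (hL : 0 ≤ L) :
    (1 - (s-P)/(Q-P)) * A + ((s-P)/(Q-P)) * B
      ≤ (1 - (s-P')/(Q'-P')) * A' + ((s-P')/(Q'-P')) * B' + (K2 + 6*th + 3*L) := by
  set gx : ℝ := Q - P with hgx
  set gy : ℝ := Q' - P' with hgy
  have hgx0 : 0 < gx := by simp only [hgx]; linarith
  have hgy0 : 0 < gy := by simp only [hgy]; linarith
  set μ : ℝ := (s - P)/gx with hμ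
  set ν : ℝ := (s - P')/gy with hν
  have hμ0 : 0 ≤ μ := div_nonneg (by linarith) (le_of_lt hgx0)
  have hμ1 : μ ≤ 1 := (div_le_one hgx0).2 (by simp only [hgx]; linarith)
  have hν0 : 0 ≤ ν := div_nonneg (by linarith) (le_of_lt hgy0)
  have hμν : μ - ν ≤ 3/gy := by
    have key : (s - P) * gy ≤ (s - P' + 3) * gx := by
      have hsp_le : s - P ≤ gx := by simp only [hgx]; linarith
      nlinarith [mul_nonneg (by linarith : (0:ℝ) ≤ s - P)
          (by linarith : (0:ℝ) ≤ gx + 2 - gy),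
        mul_nonneg (le_of_lt hgx0) (by linarith : (0:ℝ) ≤ P - P' + 1)]
    have h1 : μ ≤ (s - P' + 3)/gy := by
      rw [hμ, div_le_div_iff₀ hgx0 hgy0]
      exact key
    have h2 : (s - P' + 3)/gy = ν + 3/gy := by
      rw [hν, ← add_div]
    linarith
  have hiden : ((1 - μ) * A + μ * B) - ((1 - ν) * A' + ν * B') =
      (1-μ)*(A - A') + μ*(B - B') + (μ - ν)*(B' - A') := by ring
  have t1 : (1-μ)*(A - A') ≤ (1-μ)*K1 :=
    mul_le_mul_of_nonneg_left (by linarith) (by linarith)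
  have t2 : μ*(B - B') ≤ μ*K2 :=
    mul_le_mul_of_nonneg_left (by linarith) hμ0
  have t3 : (μ - ν)*(B' - A') ≤ (3/gy)*(B' - A') :=
    mul_le_mul_of_nonneg_right hμν hBA0
  have t4 : (3/gy)*(B' - A') ≤ 6*th + 3*L := by
    rw [div_mul_eq_mul_div, div_le_iff₀ hgy0]
    nlinarith [hBAub, hBA0,
      mul_nonneg hth (by linarith : (0:ℝ) ≤ gy - 1),
      mul_nonneg hL (by linarith : (0:ℝ) ≤ gy - 1)]
  have t5 : (1-μ)*K1 ≤ (1-μ)*K2 :=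
    mul_le_mul_of_nonneg_left hK12 (by linarith)
  have t6 : (1-μ)*K2 + μ*K2 = K2 := by ring
  linarith

end Stmt15Aux
namespace Stmt15Aux

variable {Z : Type u} {W : Type v} [MetricSpace Z] [MetricSpace W]
variable {theta lam : ℝ} {f : Z → W}

/-- One-sided version of the main comparison. -/
lemma main_onesided (htheta : 1 ≤ theta) (hlam : 1 ≤ lam)
    (hf : IsPQS theta lam f) (hinj : Function.Injective f)
    {x y : Z} (hxy : x ≠ y)
    {Phix Phiy : ℝ → ℝ}
    (hextx : IsLinearExtension (scaleSpectrum x) (phiMap f x) Phix)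
    (hexty : IsLinearExtension (scaleSpectrum y) (phiMap f y) Phiy)
    {s : ℝ} (hds : dist x y ≤ (2:ℝ) ^ (-s)) :
    Phix s ≤ Phiy s + (20*theta + 10*(Real.logb 2 lam + 1) + 10) := by
  set L : ℝ := Real.logb 2 lam + 1 with hLdef
  have hL1 : 1 ≤ L := by
    have := Real.logb_nonneg one_lt_two hlam
    simp only [hLdef]
    linarith
  have hth0 : 0 < theta := lt_of_lt_of_le one_pos htheta
  have hd0 : 0 < dist x y := dist_pos.2 hxy
  set lstar : ℤ := lv (dist x y) with hlstar
  have hlxS : lstar ∈ scaleSpectrum x := by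
    have h0 : 0 < dist y x := by rw [dist_comm]; exact hd0
    have h := lv_mem_spectrum h0
    rw [dist_comm y x] at h
    exact h
  have hlyS : lstar ∈ scaleSpectrum y := lv_mem_spectrum (x := y) (z := x) hd0
  have hdlstar : dist x y ≤ (2:ℝ) ^ (-lstar) := lv_le hd0
  have hslstar : s < (lstar:ℝ) + 1 := by
    have h1 : (2:ℝ) ^ ((-lstar - 1 : ℤ) : ℝ) < (2:ℝ) ^ (-s) := by
      rw [← zpow_eq_rpow]
      exact lt_of_lt_of_le (lv_lt hd0) hds
    have h2 := (Real.rpow_lt_rpow_left_iff one_lt_two).1 h1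
    push_cast at h2
    linarith
  -- distance bound at any integer scale `j ≤ s`
  have hdj : ∀ j : ℤ, (j:ℝ) ≤ s → dist x y ≤ (2:ℝ) ^ (-j) := by
    intro j hj
    calc dist x y ≤ (2:ℝ) ^ (-s) := hds
      _ ≤ (2:ℝ) ^ ((-j : ℤ) : ℝ) := by
          apply (Real.rpow_le_rpow_left_iff one_lt_two).2
          push_cast
          linarith
      _ = (2:ℝ) ^ (-j) := (zpow_eq_rpow _).symm
  -- distance bound at scales `j ≤ lstar`
  have hdj' : ∀ j : ℤ, j ≤ lstar → dist x y ≤ (2:ℝ) ^ (-j) := by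
    intro j hj
    exact le_trans hdlstar (two_zpow_le_iff.2 (by omega))
  have hdj2 : ∀ j : ℤ, j + 2 ≤ lstar → dist x y ≤ (2:ℝ) ^ (-j-2) := by
    intro j hj
    have := hdj' (j+2) hj
    rwa [show (-(j+2) : ℤ) = -j-2 by ring] at this
  -- `α`-type case, used twice: the least spectrum element `q ≥ s` satisfies `q ≤ s+4`.
  have alpha_case : ∀ q : ℤ, q ∈ scaleSpectrum x → s ≤ (q:ℝ) → (q:ℝ) ≤ s + 4 →
      q ≤ lstar → (∀ j ∈ scaleSpectrum x, s ≤ (j:ℝ) → q ≤ j) →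
      Phix s ≤ Phiy s + (20*theta + 10*L + 10) := by
    intro q hqS hsq hq4 hql hqmin
    have hupper := ext_upper_q htheta hlam hf hinj hextx hqS hsq hqmin
    obtain ⟨z, hz1, _⟩ := hqS
    have hcmp := phi_compare htheta hlam hf hinj hxy (hdj' q hql) ⟨z, hz1⟩
    obtain ⟨hfarY, hcmp2⟩ := hcmp
    have hF := ext_lower_far htheta hlam hf hinj hexty (s := s)
      (n := q + 3) (by push_cast; linarith) hfarY
    push_cast at hF
    have h7 : theta * ((q:ℝ) + 3 - s) ≤ theta * 7 :=
      mul_le_mul_of_nonneg_left (by linarith) (le_of_lt hth0)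
    linarith
  by_cases hP : ∃ j ∈ scaleSpectrum x, (j:ℝ) ≤ s
  · obtain ⟨p, ⟨hpS, hps⟩, hpmax⟩ := Int.exists_greatest_of_bdd
      (⟨⌊s⌋, fun z hz => Int.le_floor.2 hz.2⟩ :
        ∃ b : ℤ, ∀ z : ℤ, (z ∈ scaleSpectrum x ∧ (z:ℝ) ≤ s) → z ≤ b)
      hP
    have hpmax' : ∀ j ∈ scaleSpectrum x, (j:ℝ) ≤ s → j ≤ p :=
      fun j hj hjs => hpmax j ⟨hj, hjs⟩
    by_cases hbeta : s - 3 ≤ (p:ℝ)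
    · -- case β
      have hupper := ext_upper_p htheta hlam hf hinj hextx hpS hps hpmax'
      have hpS' := hpS
      obtain ⟨z, hz1, _⟩ := hpS'
      have hcmp := phi_compare htheta hlam hf hinj hxy
        (hdj p hps) ⟨z, hz1⟩
      obtain ⟨hfarY, hcmp2⟩ := hcmp
      have hF := ext_lower_far htheta hlam hf hinj hexty (s := s)
        (n := p + 3) (by push_cast; linarith) hfarY
      push_cast at hF
      have h3 : theta * ((p:ℝ) + 3 - s) ≤ theta * 3 :=
        mul_le_mul_of_nonneg_left (by linarith) (le_of_lt hth0)
      have h4 : theta * (s - (p:ℝ)) ≤ theta * 3 :=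
        mul_le_mul_of_nonneg_left (by linarith) (le_of_lt hth0)
      linarith
    · -- `s - p > 3`; in particular `s ≤ lstar` and the least element `q ≥ s` exists
      push_neg at hbeta
      have hsls : s ≤ (lstar:ℝ) := by
        by_contra h
        push_neg at h
        have h1 := hpmax lstar ⟨hlxS, le_of_lt h⟩
        have h2 : (lstar:ℝ) ≤ (p:ℝ) := by exact_mod_cast h1
        linarith
      obtain ⟨q, ⟨hqS, hsq⟩, hqmin⟩ := Int.exists_least_of_bdd
        (⟨⌈s⌉, fun z hz => Int.ceil_le.2 hz.2⟩ :
          ∃ b : ℤ, ∀ z : ℤ, (z ∈ scaleSpectrum x ∧ s ≤ (z:ℝ)) → b ≤ z)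
        ⟨lstar, hlxS, hsls⟩
      have hqmin' : ∀ j ∈ scaleSpectrum x, s ≤ (j:ℝ) → q ≤ j :=
        fun j hj hjs => hqmin j ⟨hj, hjs⟩
      have hqls : q ≤ lstar := hqmin lstar ⟨hlxS, hsls⟩
      by_cases halpha : (q:ℝ) ≤ s + 4
      · exact alpha_case q hqS hsq halpha hqls hqmin'
      · -- case γ: deep gap
        push_neg at halpha
        have hqlsR : (q:ℝ) ≤ (lstar:ℝ) := by exact_mod_cast hqls
        have hpq : p < q := by
          have : (p:ℝ) < (q:ℝ) := by linarith
          exact_mod_cast this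
        have hqp8 : p + 7 < q := by
          have : (p:ℝ) + 7 < (q:ℝ) := by linarith
          exact_mod_cast this
        have hgapx : ∀ l ∈ scaleSpectrum x, l ≤ p ∨ q ≤ l := fun l hl => by
          by_cases h : (l:ℝ) ≤ s
          · exact Or.inl (hpmax' l hl h)
          · exact Or.inr (hqmin' l hl (le_of_not_ge h))
        -- transfers, valid at scales `j ≤ s` (then `j + 2 ≤ lstar`)
        have hj2l : ∀ j : ℤ, (j:ℝ) ≤ s → j + 2 ≤ lstar := by
          intro j hjs
          have : ((j+2:ℤ):ℝ) ≤ (lstar:ℝ) := by push_cast; linarith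
          exact_mod_cast this
        have hT : ∀ j : ℤ, j ∈ scaleSpectrum x → (j:ℝ) ≤ s →
            ∃ i ∈ scaleSpectrum y, j - 1 ≤ i ∧ i ≤ j + 1 := by
          intro j hj hjs
          exact spec_transfer hj (hdj2 j (hj2l j hjs))
        have hT' : ∀ j : ℤ, j ∈ scaleSpectrum y → (j:ℝ) ≤ s →
            ∃ i ∈ scaleSpectrum x, j - 1 ≤ i ∧ i ≤ j + 1 := by
          intro j hj hjs
          exact spec_transfer (x := y) (y := x) hj
            (by rw [dist_comm]; exact hdj2 j (hj2l j hjs))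
        -- the `y`-side greatest element ≤ s
        obtain ⟨e, heS, he1, he2⟩ := hT p hpS hps
        have heS' : (e:ℝ) ≤ s := by
          have : (e:ℝ) ≤ (p:ℝ) + 1 := by exact_mod_cast he2
          linarith
        obtain ⟨p', ⟨hp'S, hp's⟩, hp'max⟩ := Int.exists_greatest_of_bdd
          (⟨⌊s⌋, fun z hz => Int.le_floor.2 hz.2⟩ :
            ∃ b : ℤ, ∀ z : ℤ, (z ∈ scaleSpectrum y ∧ (z:ℝ) ≤ s) → z ≤ b)
          ⟨e, heS, heS'⟩
        have hp'max' : ∀ j ∈ scaleSpectrum y, (j:ℝ) ≤ s → j ≤ p' :=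
          fun j hj hjs => hp'max j ⟨hj, hjs⟩
        -- the `y`-side least element ≥ s
        obtain ⟨q', ⟨hq'S, hsq'⟩, hq'min⟩ := Int.exists_least_of_bdd
          (⟨⌈s⌉, fun z hz => Int.ceil_le.2 hz.2⟩ :
            ∃ b : ℤ, ∀ z : ℤ, (z ∈ scaleSpectrum y ∧ s ≤ (z:ℝ)) → b ≤ z)
          ⟨lstar, hlyS, hsls⟩
        have hq'min' : ∀ j ∈ scaleSpectrum y, s ≤ (j:ℝ) → q' ≤ j :=
          fun j hj hjs => hq'min j ⟨hj, hjs⟩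
        -- p' ∈ [p-1, p+1]
        have hp'lb : p - 1 ≤ p' := le_trans he1 (hp'max e ⟨heS, heS'⟩)
        have hp'ub : p' ≤ p + 1 := by
          by_contra h
          push_neg at h
          obtain ⟨i, hiS, hi1, hi2⟩ := hT' p' hp'S hp's
          rcases hgapx i hiS with hi | hi
          · omega
          · have h1 : (i:ℝ) ≤ (p':ℝ) + 1 := by exact_mod_cast hi2
            have h2 : (q:ℝ) ≤ (i:ℝ) := by exact_mod_cast hi
            linarith
        -- q' ∈ [q-1, q+1]
        have hq'lb : q - 1 ≤ q' := by
          by_contra h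
          push_neg at h
          have h1 : q' + 2 ≤ lstar := by omega
          obtain ⟨i, hiS, hi1, hi2⟩ := spec_transfer (x := y) (y := x) hq'S
            (by rw [dist_comm]; exact hdj2 q' h1)
          rcases hgapx i hiS with hi | hi
          · have h2 : (q':ℝ) ≤ (p:ℝ) + 1 := by exact_mod_cast (by omega : q' ≤ p + 1)
            linarith
          · omega
        have hq'ub : q' ≤ q + 1 := by
          by_cases hcase : q + 2 ≤ lstar
          · obtain ⟨i, hiS, hi1, hi2⟩ := spec_transfer hqS (hdj2 q hcase)
            have : q' ≤ i := hq'min i ⟨hiS, by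
              have h1 : (q:ℝ) - 1 ≤ (i:ℝ) := by exact_mod_cast hi1
              linarith⟩
            omega
          · have : lstar ≤ q + 1 := by omega
            exact le_trans (hq'min lstar ⟨hlyS, hsls⟩) this
        -- strictness
        have hp'q' : p' < q' := by
          have h1 : (p':ℝ) ≤ (p:ℝ) + 1 := by exact_mod_cast hp'ub
          have h2 : (q:ℝ) - 1 ≤ (q':ℝ) := by exact_mod_cast hq'lb
          have : (p':ℝ) < (q':ℝ) := by linarith
          exact_mod_cast this
        have hgapy : ∀ l ∈ scaleSpectrum y, l ≤ p' ∨ q' ≤ l := fun l hl => by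
          by_cases h : (l:ℝ) ≤ s
          · exact Or.inl (hp'max' l hl h)
          · exact Or.inr (hq'min' l hl (le_of_not_ge h))
        -- evaluations
        have hevalx := ext_eval_gap hextx hpS hqS hpq hgapx hps (by linarith)
        have hevaly := ext_eval_gap hexty hp'S hq'S hp'q' hgapy hp's (by
          have : (q:ℝ) - 1 ≤ (q':ℝ) := by exact_mod_cast hq'lb
          linarith)
        -- value comparisons
        have hpS2 := hpS
        obtain ⟨zp, hzp1, _⟩ := hpS2
        obtain ⟨hfarYp, hcmp_p⟩ := phi_compare htheta hlam hf hinj hxy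
          (hdj p hps) ⟨zp, hzp1⟩
        have hqS2 := hqS
        obtain ⟨zq, hzq1, _⟩ := hqS2
        obtain ⟨hfarYq, hcmp_q⟩ := phi_compare htheta hlam hf hinj hxy
          (hdj' q hqls) ⟨zq, hzq1⟩
        -- φ_y(p+3) = φ_y(p')
        have hconst : phiMap f y (p+3) = phiMap f y p' := by
          apply phi_gapconst
          · omega
          · intro j hj
            by_cases h : (j:ℝ) ≤ s
            · exact Or.inl (hp'max' j hj h)
            · right
              have h1 := hq'min' j hj (le_of_not_ge h)
              omega
        -- growth from q' to q+3
        have hq'q3 : q' ≤ q + 3 := by omega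
        have hgrow_q := phi_growth htheta hlam hf hinj hq'S hq'q3
        -- monotonicity and growth on the y-gap
        have hp'S2 := hp'S
        obtain ⟨zp', hzp'1, _⟩ := hp'S2
        have hmono_y : phiMap f y p' ≤ phiMap f y q' :=
          phi_mono htheta hlam hf hinj ⟨zp', hzp'1⟩ (le_of_lt hp'q')
        have hgrow_y := phi_growth htheta hlam hf hinj hp'S (le_of_lt hp'q')
        -- now the algebra
        have hconstR : ((phiMap f y (p+3) : ℤ) : ℝ) = ((phiMap f y p' : ℤ) : ℝ) := by
          exact_mod_cast hconst
        have hAA' : ((phiMap f x p : ℤ) : ℝ) ≤ ((phiMap f y p' : ℤ) : ℝ) + (2*theta + L) := by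
          linarith [hcmp_p, hconstR]
        have hq'lbR : (q:ℝ) - 1 ≤ (q':ℝ) := by exact_mod_cast hq'lb
        have hq'ubR : (q':ℝ) ≤ (q:ℝ) + 1 := by exact_mod_cast hq'ub
        have hp'lbR : (p:ℝ) - 1 ≤ (p':ℝ) := by exact_mod_cast hp'lb
        have hp'ubR : (p':ℝ) ≤ (p:ℝ) + 1 := by exact_mod_cast hp'ub
        have hp'q'R : (p':ℝ) + 1 ≤ (q':ℝ) := by exact_mod_cast hp'q'
        have hBB' : ((phiMap f x q : ℤ) : ℝ) ≤ ((phiMap f y q' : ℤ) : ℝ) + (7*theta + 2*L) := by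
          have h3 : (((q+3 : ℤ)):ℝ) = (q:ℝ) + 3 := by push_cast; ring
          rw [h3] at hgrow_q
          have h4 : theta * ((q:ℝ) + 3 - (q':ℝ) + 1) ≤ theta * 5 :=
            mul_le_mul_of_nonneg_left (by linarith) (le_of_lt hth0)
          linarith [hcmp_q, hgrow_q]
        have hBA0 : (0:ℝ) ≤ ((phiMap f y q' : ℤ) : ℝ) - ((phiMap f y p' : ℤ) : ℝ) := by
          have h : ((phiMap f y p' : ℤ):ℝ) ≤ ((phiMap f y q' : ℤ):ℝ) := by
            exact_mod_cast hmono_y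
          linarith
        have hBAub : ((phiMap f y q' : ℤ) : ℝ) - ((phiMap f y p' : ℤ) : ℝ) ≤
            theta * ((q':ℝ) - (p':ℝ) + 1) + L := by
          linarith [hgrow_y]
        rw [hevalx, hevaly]
        have hmain := interp_compare (A := ((phiMap f x p : ℤ) : ℝ))
          (B := ((phiMap f x q : ℤ) : ℝ)) (A' := ((phiMap f y p' : ℤ) : ℝ))
          (B' := ((phiMap f y q' : ℤ) : ℝ)) (P := (p:ℝ)) (Q := (q:ℝ))
          (P' := (p':ℝ)) (Q' := (q':ℝ)) (s := s)
          (K1 := 2*theta + L) (K2 := 7*theta + 2*L) (th := theta) (L := L)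
          (by linarith) (by linarith) (by linarith) hps (by linarith)
          hp's (by linarith) hAA' hBB' hBA0 hBAub (by linarith) (by linarith)
          (by linarith) (le_of_lt hth0) (by linarith)
        linarith
  · -- case δ: no spectrum element of x below s
    push_neg at hP
    have hsls : s ≤ (lstar:ℝ) := le_of_lt (hP lstar hlxS)
    obtain ⟨q, ⟨hqS, hsq⟩, hqmin⟩ := Int.exists_least_of_bdd
      (⟨⌈s⌉, fun z hz => Int.ceil_le.2 hz.2⟩ :
        ∃ b : ℤ, ∀ z : ℤ, (z ∈ scaleSpectrum x ∧ s ≤ (z:ℝ)) → b ≤ z)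
      ⟨lstar, hlxS, hsls⟩
    have hqmin' : ∀ j ∈ scaleSpectrum x, s ≤ (j:ℝ) → q ≤ j :=
      fun j hj hjs => hqmin j ⟨hj, hjs⟩
    have hqls : q ≤ lstar := hqmin lstar ⟨hlxS, hsls⟩
    by_cases halpha : (q:ℝ) ≤ s + 4
    · exact alpha_case q hqS hsq halpha hqls hqmin'
    · push_neg at halpha
      -- δ-deep case
      have hqminS : ∀ l ∈ scaleSpectrum x, q ≤ l :=
        fun l hl => hqmin l ⟨hl, le_of_lt (hP l hl)⟩
      have hminx := hextx.2.2.2 q hqS hqminS s hsq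
      have hqS2 := hqS
      obtain ⟨zq, hzq1, _⟩ := hqS2
      obtain ⟨hfarY, hcmp⟩ := phi_compare htheta hlam hf hinj hxy (hdj' q hqls) ⟨zq, hzq1⟩
      -- every y-spectrum point is ≥ q - 1
      have hySlb : ∀ j ∈ scaleSpectrum y, q - 1 ≤ j := by
        intro j hj
        obtain ⟨w, hw1, _⟩ := hj
        have hwx : dist w x ≤ (2:ℝ) ^ (-q) := min_bound hqminS w
        have hwy : dist w y ≤ (2:ℝ) ^ (-(q-1)) := by
          have h1 : dist w y ≤ dist w x + dist x y := dist_triangle w x y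
          have h2 : dist x y ≤ (2:ℝ) ^ (-q) := hdj' q hqls
          have h3 : (2:ℝ) ^ (-(q-1)) = 2 * (2:ℝ) ^ (-q) := by
            rw [show (-(q-1) : ℤ) = 1 + (-q) by ring, zpow_add₀ (by norm_num : (2:ℝ) ≠ 0)]
            norm_num
          linarith
        have h5 := lt_of_lt_of_le hw1 hwy
        have h6 := two_zpow_lt_iff.1 h5
        omega
      -- the y-spectrum minimum
      obtain ⟨v, hv⟩ := hfarY
      have hvy : 0 < dist v y := lt_trans (two_zpow_pos _) hv
      have hvS : lv (dist v y) ∈ scaleSpectrum y := lv_mem_spectrum hvy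
      have hvle : lv (dist v y) ≤ q + 3 := lv_le_of_lt hv
      obtain ⟨my, ⟨myS, _⟩, hmymin⟩ := Int.exists_least_of_bdd
        (⟨q - 1, fun z hz => hySlb z hz.1⟩ :
          ∃ b : ℤ, ∀ z : ℤ, (z ∈ scaleSpectrum y ∧ True) → b ≤ z)
        ⟨lv (dist v y), hvS, trivial⟩
      have hmymin' : ∀ l ∈ scaleSpectrum y, my ≤ l := fun l hl => hmymin l ⟨hl, trivial⟩
      have hmylb : q - 1 ≤ my := hySlb my myS
      have hmyub : my ≤ q + 3 := le_trans (hmymin _ ⟨hvS, trivial⟩) hvle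
      have hsmy : s ≤ (my:ℝ) := by
        have h1 : (q:ℝ) - 1 ≤ (my:ℝ) := by exact_mod_cast hmylb
        linarith
      have hminy := hexty.2.2.2 my myS hmymin' s hsmy
      have hgrow := phi_growth htheta hlam hf hinj myS hmyub
      have hmyq3 : ((q + 3 : ℤ):ℝ) = (q:ℝ) + 3 := by push_cast; ring
      rw [hmyq3] at hgrow
      rw [hminx, hminy]
      have hc1 : (my:ℝ) ≤ (q:ℝ) + 3 := by exact_mod_cast hmyub
      have hc2 : (q:ℝ) - 1 ≤ (my:ℝ) := by exact_mod_cast hmylb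
      have hth1 : theta * ((q:ℝ) + 3 - (my:ℝ) + 1) ≤ theta * 5 :=
        mul_le_mul_of_nonneg_left (by linarith) (le_of_lt hth0)
      linarith [hcmp, hgrow]

end Stmt15Aux
/-- for `t ≥ d_Z(x,y)`,
`|Φ_x(log₂(1/t)) − Φ_y(log₂(1/t))| ≤ C(θ,λ)`. -/
theorem stmt15 (theta lam : ℝ) (htheta : 1 ≤ theta) (hlam : 1 ≤ lam) :
    ∃ C : ℝ, 0 ≤ C ∧
      ∀ (Z : Type u) (W : Type v) [MetricSpace Z] [MetricSpace W],
        AtLeastThree Z → AtLeastThree W →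
        ∀ (f : Z ≃ₜ W), IsPQS theta lam f →
        ∀ (x y : Z), x ≠ y →
        ∀ Phix Phiy : ℝ → ℝ,
          IsLinearExtension (scaleSpectrum x) (phiMap f x) Phix →
          IsLinearExtension (scaleSpectrum y) (phiMap f y) Phiy →
          ∀ t : ℝ, dist x y ≤ t →
            |Phix (Real.logb 2 (1 / t)) - Phiy (Real.logb 2 (1 / t))| ≤ C := by
  refine ⟨20*theta + 10*(Real.logb 2 lam + 1) + 10, ?_, ?_⟩
  · have h1 : 0 ≤ Real.logb 2 lam := Real.logb_nonneg one_lt_two hlam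
    linarith
  intro Z W _ _ _ _ f hf x y hxy Phix Phiy hextx hexty t ht
  have hd0 : 0 < dist x y := dist_pos.2 hxy
  have ht0 : 0 < t := lt_of_lt_of_le hd0 ht
  set s : ℝ := Real.logb 2 (1/t) with hs
  have hpow : (2:ℝ) ^ (-s) = t := by
    rw [hs, one_div, Real.logb_inv, neg_neg]
    exact Real.rpow_logb (by norm_num) (by norm_num) ht0
  have hds : dist x y ≤ (2:ℝ) ^ (-s) := by rw [hpow]; exact ht
  have hds' : dist y x ≤ (2:ℝ) ^ (-s) := by rw [dist_comm]; exact hds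
  have hinj : Function.Injective f := f.injective
  have h1 := Stmt15Aux.main_onesided htheta hlam hf hinj hxy hextx hexty hds
  have h2 := Stmt15Aux.main_onesided htheta hlam hf hinj (Ne.symm hxy) hexty hextx hds'
  rw [abs_le]
  constructor <;> linarith
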